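/- Let p be a prime with p ≡ 3 (mod 4) and n ≥ 2. Then, as elements of ℚ_p, ∏_{k=1}^{(p^{2n}-1)/2} (4k-1)/(4k+1) = [∏_{k=1}^{(p^{2n-2}-1)/2} (4k-1)/(4k+1)] · [Γ_p((2p^{2n-1}+3)/4)/Γ_p((2p^{2n-1}+1)/4)] · [Γ_p((2p^{2n}+1)/4)/Γ_p((2p^{2n}+3)/4)]. -/

import Mathlib

open Finset Filter

/-- Morita's `p`-adic Gamma function at natural numbers:
`Γ_p(n) = (-1)^n ∏_{1 ≤ k < n, p ∤ k} k`. -/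
noncomputable def pGammaNat (p : ℕ) [Fact p.Prime] (n : ℕ) : ℤ_[p] :=
  (-1) ^ n * ∏ k ∈ (Finset.range n).filter (fun k => ¬ p ∣ k), (k : ℤ_[p])

/-- Morita's `p`-adic Gamma function on `ℤ_p`, the continuous extension of `pGammaNat`. -/
noncomputable def pGamma (p : ℕ) [Fact p.Prime] (x : ℤ_[p]) : ℤ_[p] :=
  limUnder (Filter.comap (Nat.cast : ℕ → ℤ_[p]) (nhds x)) (pGammaNat p)

/-- Extension of `pGamma` to `ℚ_p` (by `0` outside `ℤ_p`), used to take derivatives. -/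
noncomputable def pGammaQ (p : ℕ) [Fact p.Prime] (x : ℚ_[p]) : ℚ_[p] :=
  if h : ‖x‖ ≤ 1 then (pGamma p ⟨x, h⟩ : ℚ_[p]) else 0


lemma zmod_sq_eq_one (p N : ℕ) (hp : p.Prime) (hodd : p ≠ 2)
    (x : ZMod (p ^ N)) (hx : x * x = 1) : x = 1 ∨ x = -1 := by
  haveI : NeZero (p ^ N) := ⟨pow_ne_zero _ hp.ne_zero⟩
  obtain ⟨a, rfl⟩ : ∃ a : ℤ, (a : ZMod (p ^ N)) = x := ⟨(x.val : ℤ), by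
    push_cast; simp [ZMod.natCast_val, ZMod.cast_id]⟩
  have h : ((p : ℤ) ^ N) ∣ (a - 1) * (a + 1) := by
    have : (((a - 1) * (a + 1) : ℤ) : ZMod (p ^ N)) = 0 := by
      push_cast
      rw [← sub_eq_zero] at hx
      linear_combination hx
    rwa [ZMod.intCast_zmod_eq_zero_iff_dvd, Nat.cast_pow] at this
  have hpZ : Prime (p : ℤ) := Nat.prime_iff_prime_int.mp hp
  have hnotboth : ¬ ((p:ℤ) ∣ (a - 1) ∧ (p:ℤ) ∣ (a + 1)) := by
    rintro ⟨h1, h2⟩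
    have hd2 : (p:ℤ) ∣ 2 := by
      have := dvd_sub h2 h1
      simpa using this
    have := Int.le_of_dvd (by norm_num) hd2
    have := hp.two_le
    omega
  rcases (em ((p:ℤ) ∣ (a + 1))) with hd | hd
  · have hnd : ¬ (p:ℤ) ∣ (a - 1) := fun h1 => hnotboth ⟨h1, hd⟩
    have hcop : IsCoprime ((p:ℤ) ^ N) (a - 1) :=
      (IsCoprime.pow_left ((hpZ.coprime_iff_not_dvd).mpr hnd))
    have hdvd : ((p:ℤ) ^ N) ∣ (a + 1) := hcop.dvd_of_dvd_mul_left h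
    right
    have h0 : (((a + 1 : ℤ)) : ZMod (p ^ N)) = 0 := by
      rw [ZMod.intCast_zmod_eq_zero_iff_dvd, Nat.cast_pow]; exact hdvd
    push_cast at h0
    linear_combination h0
  · have hcop : IsCoprime ((p:ℤ) ^ N) (a + 1) :=
      (IsCoprime.pow_left ((hpZ.coprime_iff_not_dvd).mpr hd))
    have hdvd : ((p:ℤ) ^ N) ∣ (a - 1) := hcop.dvd_of_dvd_mul_right h
    left
    have h0 : (((a - 1 : ℤ)) : ZMod (p ^ N)) = 0 := by
      rw [ZMod.intCast_zmod_eq_zero_iff_dvd, Nat.cast_pow]; exact hdvd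
    push_cast at h0
    linear_combination h0

lemma units_sq_cases (p N : ℕ) (hp : p.Prime) (hodd : p ≠ 2)
    (u : (ZMod (p ^ N))ˣ) (hu : u⁻¹ = u) : u = 1 ∨ u = -1 := by
  have h : (u : ZMod (p ^ N)) * u = 1 := by
    have := u.mul_inv
    rw [hu] at this
    exact_mod_cast this
  rcases zmod_sq_eq_one p N hp hodd u h with h1 | h1
  · left; ext; simpa using h1
  · right; ext; simpa using h1

lemma neg_one_ne_one_zmod (p N : ℕ) (hp : p.Prime) (hodd : p ≠ 2) (hN : 1 ≤ N) :
    (-1 : (ZMod (p ^ N))ˣ) ≠ 1 := by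
  haveI : NeZero (p ^ N) := ⟨pow_ne_zero _ hp.ne_zero⟩
  intro h
  have h' : (-1 : ZMod (p ^ N)) = 1 := by simpa using congrArg (Units.val) h
  have h2 : ((2 : ℕ) : ZMod (p ^ N)) = 0 := by
    push_cast
    linear_combination -h'
  rw [ZMod.natCast_eq_zero_iff] at h2
  have hge : 3 ≤ p ^ N := by
    have : 3 ≤ p := by have := hp.two_le; omega
    calc 3 ≤ p := this
    _ = p ^ 1 := (pow_one p).symm
    _ ≤ p ^ N := Nat.pow_le_pow_right (by omega) hN
  have := Nat.le_of_dvd (by norm_num) h2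
  omega

lemma prod_units_zmod (p N : ℕ) (hp : p.Prime) (hodd : p ≠ 2) (hN : 1 ≤ N) [NeZero (p ^ N)] :
    ∏ u : (ZMod (p ^ N))ˣ, (u : ZMod (p ^ N)) = -1 := by
  classical
  have hne : (-1 : (ZMod (p ^ N))ˣ) ≠ 1 := neg_one_ne_one_zmod p N hp hodd hN
  have hsub : ({1, -1} : Finset (ZMod (p ^ N))ˣ) ⊆ univ := subset_univ _
  rw [← Finset.prod_sdiff hsub]
  have h1 : ∏ u ∈ (univ \ {1, -1} : Finset (ZMod (p ^ N))ˣ), (u : ZMod (p ^ N)) = 1 := by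
    refine Finset.prod_involution (fun u _ => u⁻¹)
      (fun a ha => by exact_mod_cast a.mul_inv)
      (fun a ha hfa heq => ?_) (fun a ha => ?_) (fun a ha => inv_inv a)
    · rcases units_sq_cases p N hp hodd a (by exact heq) with h | h <;>
        simp [h, Finset.mem_sdiff] at ha
    · show a⁻¹ ∈ _
      rw [Finset.mem_sdiff] at ha ⊢
      refine ⟨Finset.mem_univ _, fun hmem => ha.2 ?_⟩
      rw [Finset.mem_insert, Finset.mem_singleton] at hmem ⊢
      rcases hmem with h | h
      · left; rw [← inv_inv a, h]; simp
      · right; rw [← inv_inv a, h]; simp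
  rw [h1, one_mul]
  rw [Finset.prod_pair (Ne.symm hne)]
  simp

lemma prod_Ico_zmod {M : Type*} [CommMonoid M] (P m : ℕ) [NeZero P] (g : ZMod P → M) :
    ∏ k ∈ Finset.Ico m (m + P), g (k : ZMod P) = ∏ x : ZMod P, g x := by
  have hP : 0 < P := Nat.pos_of_ne_zero (NeZero.ne P)
  refine Finset.prod_nbij' (fun k => (k : ZMod P))
    (fun x => m + (x - (m : ZMod P)).val) ?_ ?_ ?_ ?_ ?_
  · intro a ha; exact Finset.mem_univ _
  · intro x _
    show m + (x - (m : ZMod P)).val ∈ _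
    rw [Finset.mem_Ico]
    exact ⟨Nat.le_add_right _ _, by have := ZMod.val_lt (x - (m : ZMod P)); omega⟩
  · intro k hk
    show m + ((k : ZMod P) - (m : ZMod P)).val = k
    rw [Finset.mem_Ico] at hk
    have h1 : ((k : ZMod P) - (m : ZMod P)) = ((k - m : ℕ) : ZMod P) := by
      have : (k : ZMod P) = ((m + (k - m) : ℕ) : ZMod P) := by
        congr 1; omega
      rw [this]; push_cast; ring
    rw [h1, ZMod.val_cast_of_lt (by omega)]
    omega
  · intro x _
    show ((m + (x - (m : ZMod P)).val : ℕ) : ZMod P) = x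
    push_cast [ZMod.natCast_val, ZMod.cast_id]
    ring
  · intro a ha; rfl

lemma prod_interval_units (p N m : ℕ) (hp : p.Prime) (hodd : p ≠ 2) (hN : 1 ≤ N) :
    ∏ k ∈ (Finset.Ico m (m + p ^ N)).filter (fun k => ¬ p ∣ k), ((k : ZMod (p ^ N))) = -1 := by
  haveI : NeZero (p ^ N) := ⟨pow_ne_zero _ hp.ne_zero⟩
  have key : ∀ k : ℕ, IsUnit ((k : ZMod (p ^ N))) ↔ ¬ p ∣ k := by
    intro k
    rw [ZMod.isUnit_iff_coprime, Nat.coprime_pow_right_iff hN,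
      Nat.coprime_comm, Nat.Prime.coprime_iff_not_dvd hp]
  rw [Finset.prod_filter]
  have := prod_Ico_zmod (p ^ N) m (fun x => if IsUnit x then x else 1)
  calc ∏ k ∈ Finset.Ico m (m + p ^ N), (if ¬ p ∣ k then ((k : ZMod (p ^ N))) else 1)
      = ∏ k ∈ Finset.Ico m (m + p ^ N),
          (fun x => if IsUnit x then x else 1) ((k : ZMod (p ^ N))) := by
        refine Finset.prod_congr rfl fun k _ => ?_
        by_cases h : p ∣ k
        · have hnu : ¬ IsUnit ((k : ZMod (p ^ N))) := fun hu => ((key k).mp hu) h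
          simp [h, hnu]
        · simp [h, (key k).mpr h]
    _ = ∏ x : ZMod (p ^ N), (if IsUnit x then x else 1) := this
    _ = ∏ u : (ZMod (p ^ N))ˣ, (u : ZMod (p ^ N)) := by
        rw [← Finset.prod_filter]
        refine (Finset.prod_bij (fun (u : (ZMod (p ^ N))ˣ) _ => (u : ZMod (p ^ N)))
          ?_ ?_ ?_ ?_).symm
        · intro u _; simp [Finset.mem_filter]
        · intro u _ v _ h; exact Units.ext h
        · intro x hx
          rw [Finset.mem_filter] at hx
          exact ⟨hx.2.unit, Finset.mem_univ _, rfl⟩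
        · intro u _; rfl
    _ = -1 := prod_units_zmod p N hp hodd hN


lemma pGammaNat_split (p : ℕ) [Fact p.Prime] (m c : ℕ) :
    pGammaNat p (m + c) = (-1) ^ c * pGammaNat p m
      * ∏ k ∈ (Finset.Ico m (m + c)).filter (fun k => ¬ p ∣ k), (k : ℤ_[p]) := by
  unfold pGammaNat
  rw [pow_add]
  have h : ∀ n : ℕ, ∏ k ∈ (Finset.range n).filter (fun k => ¬ p ∣ k), (k : ℤ_[p])
      = ∏ k ∈ Finset.Ico 0 n, (if ¬ p ∣ k then (k : ℤ_[p]) else 1) := by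
    intro n; rw [← Finset.range_eq_Ico, Finset.prod_filter]
  have h2 : ∏ k ∈ (Finset.Ico m (m + c)).filter (fun k => ¬ p ∣ k), (k : ℤ_[p])
      = ∏ k ∈ Finset.Ico m (m + c), (if ¬ p ∣ k then (k : ℤ_[p]) else 1) :=
    Finset.prod_filter _ _
  rw [h, h, h2, ← Finset.prod_Ico_consecutive _ (Nat.zero_le m) (Nat.le_add_right m c)]
  ring

lemma pGammaNat_succ_not_dvd (p : ℕ) [Fact p.Prime] (t : ℕ) (h : ¬ p ∣ t) :
    pGammaNat p (t + 1) = -(t : ℤ_[p]) * pGammaNat p t := by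
  rw [pGammaNat_split p t 1]
  have : Finset.Ico t (t + 1) = {t} := by
    rw [Finset.Ico_add_one_right_eq_Icc, Finset.Icc_self]
  rw [this, Finset.filter_singleton, if_pos h]
  simp
  ring

lemma pGammaNat_succ_dvd (p : ℕ) [Fact p.Prime] (t : ℕ) (h : p ∣ t) :
    pGammaNat p (t + 1) = - pGammaNat p t := by
  rw [pGammaNat_split p t 1]
  have : Finset.Ico t (t + 1) = {t} := by
    rw [Finset.Ico_add_one_right_eq_Icc, Finset.Icc_self]
  rw [this, Finset.filter_singleton, if_neg (by simpa using h)]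
  simp

lemma pGammaNat_mod_pow (p : ℕ) [Fact p.Prime] (hodd : p ≠ 2) (N : ℕ) (hN : 1 ≤ N)
    (m c : ℕ) :
    PadicInt.toZModPow N (pGammaNat p (m + c * p ^ N)) =
      PadicInt.toZModPow N (pGammaNat p m) := by
  induction c with
  | zero => simp
  | succ c ih =>
    have : m + (c + 1) * p ^ N = (m + c * p ^ N) + p ^ N := by ring
    rw [this, pGammaNat_split p (m + c * p ^ N) (p ^ N), map_mul, map_mul, map_pow,
      map_neg, map_one, ih]
    have hprod : PadicInt.toZModPow N
        (∏ k ∈ (Finset.Ico (m + c * p ^ N) (m + c * p ^ N + p ^ N)).filter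
          (fun k => ¬ p ∣ k), (k : ℤ_[p])) = -1 := by
      rw [map_prod]
      have : ∀ k : ℕ, PadicInt.toZModPow (p := p) N ((k : ℤ_[p])) = (k : ZMod (p ^ N)) := by
        intro k; rw [map_natCast]
      simp_rw [this]
      exact prod_interval_units p N (m + c * p ^ N) Fact.out hodd hN
    rw [hprod]
    have hoddpow : Odd (p ^ N) := (Nat.Prime.odd_of_ne_two Fact.out hodd).pow
    rw [hoddpow.neg_one_pow]
    ring

lemma pGammaNat_modEq (p : ℕ) [Fact p.Prime] (hodd : p ≠ 2) (N : ℕ) (hN : 1 ≤ N)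
    (m m' : ℕ) (h : m ≡ m' [MOD p ^ N]) :
    PadicInt.toZModPow N (pGammaNat p m) = PadicInt.toZModPow N (pGammaNat p m') := by
  rcases le_total m m' with hle | hle
  · obtain ⟨c, hc⟩ := (Nat.modEq_iff_dvd' hle).mp h
    have : m' = m + c * p ^ N := by rw [mul_comm]; omega
    rw [this, pGammaNat_mod_pow p hodd N hN]
  · obtain ⟨c, hc⟩ := (Nat.modEq_iff_dvd' hle).mp h.symm
    have : m = m' + c * p ^ N := by rw [mul_comm]; omega
    rw [this, pGammaNat_mod_pow p hodd N hN]

lemma norm_sub_le_of_toZModPow_eq (p : ℕ) [Fact p.Prime] (N : ℕ) (x y : ℤ_[p])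
    (h : PadicInt.toZModPow N x = PadicInt.toZModPow N y) :
    ‖x - y‖ ≤ (p : ℝ) ^ (-(N : ℤ)) := by
  rw [PadicInt.norm_le_pow_iff_mem_span_pow, ← PadicInt.ker_toZModPow, RingHom.mem_ker,
    map_sub, h, sub_self]

section
variable (p : ℕ) [Fact p.Prime]

lemma p_cast_le_real : (1 : ℝ) ≤ (p : ℝ) := by
  have := (Fact.out : p.Prime).two_le
  exact_mod_cast Nat.one_le_iff_ne_zero.mpr (by omega)

lemma pow_neg_mono {N j : ℕ} (h : N ≤ j) : (p : ℝ) ^ (-(j : ℤ)) ≤ (p : ℝ) ^ (-(N : ℤ)) :=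
  zpow_le_zpow_right₀ (p_cast_le_real p) (by omega)

lemma toZModPow_appr_eq (N j : ℕ) (h : N ≤ j) (x : ℤ_[p]) :
    PadicInt.toZModPow N ((x.appr j : ℤ_[p])) = PadicInt.toZModPow N x := by
  have hmem : x - (x.appr j : ℤ_[p]) ∈ Ideal.span {(p : ℤ_[p]) ^ N} := by
    have h1 := PadicInt.appr_spec j x
    have hle : (Ideal.span {(p : ℤ_[p]) ^ j} : Ideal ℤ_[p]) ≤ Ideal.span {(p : ℤ_[p]) ^ N} :=
      Ideal.span_singleton_le_span_singleton.mpr (pow_dvd_pow _ h)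
    exact hle h1
  rw [← PadicInt.ker_toZModPow, RingHom.mem_ker, map_sub, sub_eq_zero] at hmem
  exact hmem.symm

lemma cauchy_gamma_appr (hodd : p ≠ 2) (x : ℤ_[p]) :
    CauchySeq (fun j => pGammaNat p (x.appr j)) := by
  rw [Metric.cauchySeq_iff]
  intro ε hε
  obtain ⟨N, hNlt⟩ := PadicInt.exists_pow_neg_lt p hε
  refine ⟨N + 1, fun j hj k hk => ?_⟩
  have hmod : x.appr j ≡ x.appr k [MOD p ^ (N + 1)] := by
    rw [← ZMod.natCast_eq_natCast_iff]
    have h1 : ((x.appr j : ℕ) : ZMod (p ^ (N + 1))) =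
        PadicInt.toZModPow (N + 1) ((x.appr j : ℤ_[p])) := by rw [map_natCast]
    have h2 : ((x.appr k : ℕ) : ZMod (p ^ (N + 1))) =
        PadicInt.toZModPow (N + 1) ((x.appr k : ℤ_[p])) := by rw [map_natCast]
    rw [h1, h2, toZModPow_appr_eq p _ _ hj x, toZModPow_appr_eq p _ _ hk x]
  have := pGammaNat_modEq p hodd (N + 1) (by omega) _ _ hmod
  have hnorm := norm_sub_le_of_toZModPow_eq p (N + 1) _ _ this
  rw [dist_eq_norm]
  calc ‖pGammaNat p (x.appr j) - pGammaNat p (x.appr k)‖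
      ≤ (p : ℝ) ^ (-((N + 1 : ℕ) : ℤ)) := hnorm
    _ ≤ (p : ℝ) ^ (-(N : ℤ)) := pow_neg_mono p (by omega)
    _ < ε := hNlt

lemma pGamma_spec (hodd : p ≠ 2) (x : ℤ_[p]) :
    Tendsto (pGammaNat p) (Filter.comap (Nat.cast : ℕ → ℤ_[p]) (nhds x))
      (nhds (pGamma p x)) := by
  obtain ⟨L, hL⟩ := cauchySeq_tendsto_of_complete (cauchy_gamma_appr p hodd x)
  have hbound : ∀ N : ℕ, 1 ≤ N → ∀ t : ℕ, ‖(t : ℤ_[p]) - x‖ ≤ (p : ℝ) ^ (-(N : ℤ)) →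
      ‖pGammaNat p t - L‖ ≤ (p : ℝ) ^ (-(N : ℤ)) := by
    intro N hN t ht
    have key : ∀ j : ℕ, N ≤ j → ‖pGammaNat p t - pGammaNat p (x.appr j)‖ ≤ (p : ℝ) ^ (-(N : ℤ)) := by
      intro j hj
      have hmod : t ≡ x.appr j [MOD p ^ N] := by
        rw [← ZMod.natCast_eq_natCast_iff]
        have h1 : ((t : ℕ) : ZMod (p ^ N)) = PadicInt.toZModPow N ((t : ℤ_[p])) := by
          rw [map_natCast]
        have h2 : ((x.appr j : ℕ) : ZMod (p ^ N)) =
            PadicInt.toZModPow N ((x.appr j : ℤ_[p])) := by rw [map_natCast]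
        rw [h1, h2, toZModPow_appr_eq p _ _ hj x]
        have : (t : ℤ_[p]) - x ∈ Ideal.span {(p : ℤ_[p]) ^ N} :=
          (PadicInt.norm_le_pow_iff_mem_span_pow _ N).mp ht
        rw [← PadicInt.ker_toZModPow, RingHom.mem_ker, map_sub, sub_eq_zero] at this
        exact this
      exact norm_sub_le_of_toZModPow_eq p N _ _ (pGammaNat_modEq p hodd N hN _ _ hmod)
    -- pass to the limit in j
    have htends : Tendsto (fun j => ‖pGammaNat p t - pGammaNat p (x.appr j)‖) atTop
        (nhds ‖pGammaNat p t - L‖) :=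
      ((continuous_norm.tendsto _).comp ((tendsto_const_nhds).sub hL))
    refine le_of_tendsto htends ?_
    filter_upwards [Filter.eventually_atTop.mpr ⟨N, fun j hj => key j hj⟩] with j hj using hj
  have htend : Tendsto (pGammaNat p) (Filter.comap (Nat.cast : ℕ → ℤ_[p]) (nhds x)) (nhds L) := by
    rw [Metric.tendsto_nhds]
    intro ε hε
    obtain ⟨N, hNlt⟩ := PadicInt.exists_pow_neg_lt p hε
    have hmem : {t : ℕ | ‖(t : ℤ_[p]) - x‖ ≤ (p : ℝ) ^ (-((N+1 : ℕ) : ℤ))} ∈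
        Filter.comap (Nat.cast : ℕ → ℤ_[p]) (nhds x) := by
      have heq : {t : ℕ | ‖(t : ℤ_[p]) - x‖ ≤ (p : ℝ) ^ (-((N+1 : ℕ) : ℤ))} =
          (Nat.cast : ℕ → ℤ_[p]) ⁻¹' (Metric.closedBall x ((p : ℝ) ^ (-((N+1 : ℕ) : ℤ)))) := by
        ext y
        simp [Metric.mem_closedBall, dist_eq_norm]
      rw [heq]
      exact Filter.preimage_mem_comap (Metric.closedBall_mem_nhds x (zpow_pos (by exact_mod_cast (Fact.out : p.Prime).pos) _))
    filter_upwards [hmem] with t ht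
    rw [dist_eq_norm]
    calc ‖pGammaNat p t - L‖ ≤ (p : ℝ) ^ (-((N+1 : ℕ) : ℤ)) :=
          hbound (N + 1) (by omega) t ht
      _ ≤ (p : ℝ) ^ (-(N : ℤ)) := pow_neg_mono p (by omega)
      _ < ε := hNlt
  haveI : (Filter.comap (Nat.cast : ℕ → ℤ_[p]) (nhds x)).NeBot := by
    refine Filter.comap_neBot fun s hs => ?_
    have hd : x ∈ closure (Set.range (Nat.cast : ℕ → ℤ_[p])) := PadicInt.denseRange_natCast x
    rw [mem_closure_iff_nhds] at hd
    obtain ⟨y, hy1, t, rfl⟩ := hd s hs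
    exact ⟨t, hy1⟩
  rwa [show pGamma p x = L from htend.limUnder_eq]

lemma pGamma_tendsto_seq (hodd : p ≠ 2) (x : ℤ_[p]) (t : ℕ → ℕ)
    (ht : Tendsto (fun j => ((t j : ℕ) : ℤ_[p])) atTop (nhds x)) :
    Tendsto (fun j => pGammaNat p (t j)) atTop (nhds (pGamma p x)) :=
  (pGamma_spec p hodd x).comp (tendsto_comap_iff.mpr ht)

lemma tendsto_appr (x : ℤ_[p]) :
    Tendsto (fun j => ((x.appr j : ℕ) : ℤ_[p])) atTop (nhds x) := by
  rw [Metric.tendsto_atTop]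
  intro ε hε
  obtain ⟨N, hNlt⟩ := PadicInt.exists_pow_neg_lt p hε
  refine ⟨N, fun j hj => ?_⟩
  rw [dist_eq_norm]
  have : ‖(x.appr j : ℤ_[p]) - x‖ ≤ (p : ℝ) ^ (-(j : ℤ)) := by
    rw [norm_sub_rev, PadicInt.norm_le_pow_iff_mem_span_pow]
    exact PadicInt.appr_spec j x
  calc ‖(x.appr j : ℤ_[p]) - x‖ ≤ (p : ℝ) ^ (-(j : ℤ)) := this
    _ ≤ (p : ℝ) ^ (-(N : ℤ)) := pow_neg_mono p hj
    _ < ε := hNlt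

end

section
variable (p : ℕ) [Fact p.Prime]

lemma p_inv_lt_one : (p : ℝ) ^ (-(1 : ℕ) : ℤ) < 1 := by
  have hp2 : (2 : ℝ) ≤ (p : ℝ) := by exact_mod_cast (Fact.out : p.Prime).two_le
  have h : ((p : ℝ) ^ (-(1 : ℕ) : ℤ)) = (p : ℝ)⁻¹ := by norm_num
  rw [h, inv_lt_one_iff₀]
  right; linarith

lemma norm_natCast_eq_one {k : ℕ} (h : ¬ p ∣ k) : ‖(k : ℤ_[p])‖ = 1 := by
  have hle : ‖(k : ℤ_[p])‖ ≤ 1 := PadicInt.norm_le_one _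
  rcases lt_or_eq_of_le hle with hlt | heq
  · exfalso
    apply h
    have hcast : ((k : ℤ) : ℤ_[p]) = ((k : ℕ) : ℤ_[p]) := by push_cast; rfl
    rw [← hcast, PadicInt.norm_int_lt_one_iff_dvd] at hlt
    exact_mod_cast hlt
  · exact heq

lemma norm_pGammaNat (t : ℕ) : ‖pGammaNat p t‖ = 1 := by
  unfold pGammaNat
  rw [norm_mul]
  have h1 : ‖((-1 : ℤ_[p])) ^ t‖ = 1 := by
    rcases neg_one_pow_eq_or ℤ_[p] t with h | h <;> rw [h] <;> simp
  have h2 : ‖∏ k ∈ (Finset.range t).filter (fun k => ¬ p ∣ k), (k : ℤ_[p])‖ = 1 := by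
    refine Finset.prod_induction (fun k => ((k : ℕ) : ℤ_[p])) (fun z => ‖z‖ = 1)
      (fun a b ha hb => ?_) (by simp)
      (fun k hk => norm_natCast_eq_one p (Finset.mem_filter.mp hk).2)
    show ‖a * b‖ = 1
    rw [norm_mul, show ‖a‖ = 1 from ha, show ‖b‖ = 1 from hb, one_mul]
  rw [h1, h2, one_mul]

lemma norm_pGamma (hodd : p ≠ 2) (x : ℤ_[p]) : ‖pGamma p x‖ = 1 := by
  have h1 : Tendsto (fun j => pGammaNat p (x.appr j)) atTop (nhds (pGamma p x)) :=
    pGamma_tendsto_seq p hodd x _ (tendsto_appr p x)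
  have h2 : Tendsto (fun j => ‖pGammaNat p (x.appr j)‖) atTop (nhds ‖pGamma p x‖) :=
    (continuous_norm.tendsto _).comp h1
  have h3 : Tendsto (fun _ : ℕ => (1 : ℝ)) atTop (nhds 1) := tendsto_const_nhds
  have heq : (fun j => ‖pGammaNat p (x.appr j)‖) = fun _ : ℕ => (1 : ℝ) := by
    funext j; exact norm_pGammaNat p _
  rw [heq] at h2
  exact (tendsto_nhds_unique h2 h3)

lemma pGamma_ne_zero (hodd : p ≠ 2) (x : ℤ_[p]) : pGamma p x ≠ 0 := by
  intro h
  have := norm_pGamma p hodd x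
  rw [h, norm_zero] at this
  norm_num at this

lemma appr_close (x : ℤ_[p]) (j : ℕ) :
    ‖x - (x.appr (j + 1) : ℤ_[p])‖ ≤ (p : ℝ) ^ (-(1 : ℕ) : ℤ) := by
  have h2 : ‖x - (x.appr (j+1) : ℤ_[p])‖ ≤ (p : ℝ) ^ (-((j+1 : ℕ)) : ℤ) := by
    rw [PadicInt.norm_le_pow_iff_mem_span_pow]; exact PadicInt.appr_spec (j + 1) x
  exact h2.trans (pow_neg_mono p (by omega))

lemma pGamma_add_one_of_norm_eq_one (hodd : p ≠ 2) (x : ℤ_[p]) (hx : ‖x‖ = 1) :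
    pGamma p (x + 1) = -x * pGamma p x := by
  set t : ℕ → ℕ := fun j => x.appr (j + 1) with ht_def
  have ht : Tendsto (fun j => ((t j : ℕ) : ℤ_[p])) atTop (nhds x) :=
    (tendsto_appr p x).comp (tendsto_add_atTop_nat 1)
  have hnd : ∀ j, ¬ p ∣ t j := by
    intro j hdvd
    have h1 : ‖x - (t j : ℤ_[p])‖ ≤ (p : ℝ) ^ (-(1 : ℕ) : ℤ) := appr_close p x j
    have h3 : ‖(t j : ℤ_[p])‖ ≤ (p : ℝ) ^ (-(1 : ℕ) : ℤ) := by
      rw [PadicInt.norm_le_pow_iff_mem_span_pow]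
      obtain ⟨c, hc⟩ := hdvd
      rw [Ideal.mem_span_singleton, hc]
      push_cast
      exact ⟨c, by rw [pow_one]⟩
    have hxle : ‖x‖ ≤ (p : ℝ) ^ (-(1 : ℕ) : ℤ) := by
      calc ‖x‖ = ‖(x - (t j : ℤ_[p])) + (t j : ℤ_[p])‖ := by rw [sub_add_cancel]
        _ ≤ max ‖x - (t j : ℤ_[p])‖ ‖(t j : ℤ_[p])‖ := PadicInt.nonarchimedean _ _
        _ ≤ (p : ℝ) ^ (-(1 : ℕ) : ℤ) := max_le h1 h3
    rw [hx] at hxle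
    have := p_inv_lt_one p
    linarith
  have hL : Tendsto (fun j => pGammaNat p (t j + 1)) atTop (nhds (pGamma p (x + 1))) := by
    apply pGamma_tendsto_seq p hodd (x + 1)
    have heq : (fun j => ((t j + 1 : ℕ) : ℤ_[p])) = fun j => ((t j : ℕ) : ℤ_[p]) + 1 := by
      funext j; push_cast; ring
    rw [heq]
    exact ht.add tendsto_const_nhds
  have hR : Tendsto (fun j => pGammaNat p (t j + 1)) atTop (nhds (-x * pGamma p x)) := by
    have heq : (fun j => pGammaNat p (t j + 1)) =
        fun j => -((t j : ℕ) : ℤ_[p]) * pGammaNat p (t j) := by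
      funext j; exact pGammaNat_succ_not_dvd p (t j) (hnd j)
    rw [heq]
    exact (ht.neg).mul (pGamma_tendsto_seq p hodd x t ht)
  exact tendsto_nhds_unique hL hR

lemma pGamma_add_one_of_norm_lt_one (hodd : p ≠ 2) (x : ℤ_[p]) (hx : ‖x‖ < 1) :
    pGamma p (x + 1) = - pGamma p x := by
  set t : ℕ → ℕ := fun j => x.appr (j + 1) with ht_def
  have ht : Tendsto (fun j => ((t j : ℕ) : ℤ_[p])) atTop (nhds x) :=
    (tendsto_appr p x).comp (tendsto_add_atTop_nat 1)
  have hnd : ∀ j, p ∣ t j := by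
    intro j
    have h1 : ‖x - (t j : ℤ_[p])‖ ≤ (p : ℝ) ^ (-(1 : ℕ) : ℤ) := appr_close p x j
    have hx' : ‖x‖ ≤ (p : ℝ) ^ (-(1 : ℕ) : ℤ) := by
      have h := (PadicInt.norm_le_pow_iff_norm_lt_pow_add_one x (-1)).mpr (by
        rw [show (-1 + 1 : ℤ) = 0 by ring, zpow_zero]; exact hx)
      have hcast : ((p : ℝ) ^ (-(1 : ℕ) : ℤ)) = (p : ℝ) ^ (-1 : ℤ) := by norm_num
      rw [hcast]
      exact h
    have htj : ‖(t j : ℤ_[p])‖ ≤ (p : ℝ) ^ (-(1 : ℕ) : ℤ) := by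
      calc ‖(t j : ℤ_[p])‖ = ‖x - (x - (t j : ℤ_[p]))‖ := by rw [sub_sub_cancel]
        _ = ‖x + -(x - (t j : ℤ_[p]))‖ := by rw [sub_eq_add_neg]
        _ ≤ max ‖x‖ ‖-(x - (t j : ℤ_[p]))‖ := PadicInt.nonarchimedean _ _
        _ = max ‖x‖ ‖x - (t j : ℤ_[p])‖ := by rw [norm_neg]
        _ ≤ (p : ℝ) ^ (-(1 : ℕ) : ℤ) := max_le hx' h1
    have hlt : ‖((t j : ℤ) : ℤ_[p])‖ < 1 := by
      have hcast : ((t j : ℤ) : ℤ_[p]) = ((t j : ℕ) : ℤ_[p]) := by push_cast; rfl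
      rw [hcast]
      exact lt_of_le_of_lt htj (p_inv_lt_one p)
    rw [PadicInt.norm_int_lt_one_iff_dvd] at hlt
    exact_mod_cast hlt
  have hL : Tendsto (fun j => pGammaNat p (t j + 1)) atTop (nhds (pGamma p (x + 1))) := by
    apply pGamma_tendsto_seq p hodd (x + 1)
    have heq : (fun j => ((t j + 1 : ℕ) : ℤ_[p])) = fun j => ((t j : ℕ) : ℤ_[p]) + 1 := by
      funext j; push_cast; ring
    rw [heq]
    exact ht.add tendsto_const_nhds
  have hR : Tendsto (fun j => pGammaNat p (t j + 1)) atTop (nhds (- pGamma p x)) := by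
    have heq : (fun j => pGammaNat p (t j + 1)) = fun j => - pGammaNat p (t j) := by
      funext j; exact pGammaNat_succ_dvd p (t j) (hnd j)
    rw [heq]
    exact (pGamma_tendsto_seq p hodd x t ht).neg
  exact tendsto_nhds_unique hL hR

lemma pGamma_add_nat (hodd : p ≠ 2) (x : ℤ_[p]) (K : ℕ) :
    pGamma p (x + (K : ℤ_[p])) = pGamma p x *
      ∏ k ∈ Finset.range K, (if ‖x + (k : ℤ_[p])‖ < 1 then -1 else -(x + (k : ℤ_[p]))) := by
  induction K with
  | zero => simp
  | succ K ih =>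
    have hstep : x + ((K + 1 : ℕ) : ℤ_[p]) = (x + ((K : ℕ) : ℤ_[p])) + 1 := by push_cast; ring
    rw [hstep, Finset.prod_range_succ, ← mul_assoc, ← ih]
    rcases lt_or_eq_of_le (PadicInt.norm_le_one (x + ((K : ℕ) : ℤ_[p]))) with hlt | heq
    · rw [pGamma_add_one_of_norm_lt_one p hodd _ hlt, if_pos hlt]
      ring
    · rw [pGamma_add_one_of_norm_eq_one p hodd _ heq, if_neg (by rw [heq]; norm_num)]
      ring

end

section

lemma filter_bij3 {M : Type*} [CommMonoid M] (p m K K' : ℕ) (hp : p.Prime) (h4 : p % 4 = 3)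
    (hm : 1 ≤ m) (hK : 2 * K + 1 = p ^ m) (hK' : 2 * K' + 1 = p ^ (m - 1)) (F : ℕ → M) :
    ∏ k ∈ (Finset.range K).filter (fun k => p ∣ 4 * k + 3), F (4 * k + 3)
      = ∏ l ∈ Finset.range (K' + 1), F (p * (4 * l + 1)) := by
  have hppos : 0 < p := hp.pos
  have hpow : p * p ^ (m - 1) = p ^ m := by
    conv_rhs => rw [show m = 1 + (m - 1) by omega, pow_add, pow_one]
  have hkey : ∀ k, k ∈ (Finset.range K).filter (fun k => p ∣ 4 * k + 3) →
      (p * (4 * (((4 * k + 3) / p - 1) / 4) + 1) = 4 * k + 3) ∧ ((4 * k + 3) / p - 1) / 4 < K' + 1 := by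
    intro k hk
    rw [Finset.mem_filter, Finset.mem_range] at hk
    obtain ⟨hkK, hdvd⟩ := hk
    obtain ⟨j0, hj0⟩ : ∃ j0, p * j0 = 4 * k + 3 := ⟨_, Nat.mul_div_cancel' hdvd⟩
    have hdiv : (4 * k + 3) / p = j0 := by rw [← hj0, Nat.mul_div_cancel_left _ hppos]
    rw [hdiv]
    have hmod : j0 % 4 = 1 := by
      have h1 : (p * j0) % 4 = 3 := by omega
      have h2 : (p * j0) % 4 = (p % 4) * (j0 % 4) % 4 := Nat.mul_mod _ _ _
      have h3 := Nat.mod_lt j0 (show 0 < 4 by norm_num)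
      rw [h4] at h2
      omega
    have hlt : j0 < 4 * K' + 2 := by
      have h1 : p * j0 < p * (4 * K' + 2) := by
        have : p * (4 * K' + 2) = 2 * p ^ m := by
          rw [show 4 * K' + 2 = 2 * (2 * K' + 1) by ring, hK', ← hpow]; ring
        omega
      exact Nat.lt_of_mul_lt_mul_left h1
    have h41 : 4 * ((j0 - 1) / 4) + 1 = j0 := by omega
    constructor
    · rw [h41]; exact hj0
    · omega
  refine Finset.prod_nbij' (fun k => ((4 * k + 3) / p - 1) / 4)
    (fun l => (p * (4 * l + 1) - 3) / 4) ?_ ?_ ?_ ?_ ?_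
  · intro k hk
    beta_reduce
    rw [Finset.mem_range]
    exact (hkey k hk).2
  · intro l hl
    beta_reduce
    rw [Finset.mem_range] at hl
    rw [Finset.mem_filter, Finset.mem_range]
    set A := p * (4 * l + 1) with hA
    have hAmod : A % 4 = 3 := by
      have h2 : A % 4 = (p % 4) * ((4 * l + 1) % 4) % 4 := Nat.mul_mod _ _ _
      rw [h4] at h2
      omega
    have hA3 : 3 ≤ A := by
      have : 3 ≤ p := by omega
      calc 3 ≤ p := this
      _ ≤ p * (4 * l + 1) := Nat.le_mul_of_pos_right _ (by omega)
    have hAlt : A < 4 * K + 2 := by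
      have h1 : A < p * (4 * K' + 2) := mul_lt_mul_of_pos_left (by omega) hppos
      have h2 : p * (4 * K' + 2) = 2 * p ^ m := by
        rw [show 4 * K' + 2 = 2 * (2 * K' + 1) by ring, hK', ← hpow]; ring
      omega
    refine ⟨by omega, ?_⟩
    have : 4 * ((A - 3) / 4) + 3 = A := by omega
    rw [this]
    exact Dvd.intro _ rfl
  · intro k hk
    beta_reduce
    obtain ⟨h1, _⟩ := hkey k hk
    omega
  · intro l hl
    beta_reduce
    rw [Finset.mem_range] at hl
    set A := p * (4 * l + 1) with hA
    have hAmod : A % 4 = 3 := by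
      have h2 : A % 4 = (p % 4) * ((4 * l + 1) % 4) % 4 := Nat.mul_mod _ _ _
      rw [h4] at h2
      omega
    have hA3 : 3 ≤ A := by
      have h3p : 3 ≤ p := by omega
      calc 3 ≤ p := h3p
      _ ≤ p * (4 * l + 1) := Nat.le_mul_of_pos_right _ (by omega)
    have hstep : 4 * ((A - 3) / 4) + 3 = A := by omega
    show ((4 * ((A - 3) / 4) + 3) / p - 1) / 4 = l
    rw [hstep, hA, Nat.mul_div_cancel_left _ hppos]
    omega
  · intro k hk
    beta_reduce
    obtain ⟨h1, _⟩ := hkey k hk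
    rw [h1]

lemma filter_bij5 {M : Type*} [CommMonoid M] (p m K K' : ℕ) (hp : p.Prime) (h4 : p % 4 = 3)
    (hm : 1 ≤ m) (hK : 2 * K + 1 = p ^ m) (hK' : 2 * K' + 1 = p ^ (m - 1)) (F : ℕ → M) :
    ∏ k ∈ (Finset.range K).filter (fun k => p ∣ 4 * k + 5), F (4 * k + 5)
      = ∏ l ∈ Finset.range K', F (p * (4 * l + 3)) := by
  have hppos : 0 < p := hp.pos
  have hpow : p * p ^ (m - 1) = p ^ m := by
    conv_rhs => rw [show m = 1 + (m - 1) by omega, pow_add, pow_one]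
  have h2pm : p * (4 * K' + 2) = 2 * p ^ m := by
    rw [show 4 * K' + 2 = 2 * (2 * K' + 1) by ring, hK', ← hpow]; ring
  have hkey : ∀ k, k ∈ (Finset.range K).filter (fun k => p ∣ 4 * k + 5) →
      (p * (4 * (((4 * k + 5) / p - 3) / 4) + 3) = 4 * k + 5) ∧ ((4 * k + 5) / p - 3) / 4 < K' := by
    intro k hk
    rw [Finset.mem_filter, Finset.mem_range] at hk
    obtain ⟨hkK, hdvd⟩ := hk
    obtain ⟨j0, hj0⟩ : ∃ j0, p * j0 = 4 * k + 5 := ⟨_, Nat.mul_div_cancel' hdvd⟩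
    have hdiv : (4 * k + 5) / p = j0 := by rw [← hj0, Nat.mul_div_cancel_left _ hppos]
    rw [hdiv]
    have hmod : j0 % 4 = 3 := by
      have h1 : (p * j0) % 4 = 1 := by omega
      have h2 : (p * j0) % 4 = (p % 4) * (j0 % 4) % 4 := Nat.mul_mod _ _ _
      have h3 := Nat.mod_lt j0 (show 0 < 4 by norm_num)
      rw [h4] at h2
      omega
    have hlt : j0 < 4 * K' + 2 := by
      have h1 : p * j0 < p * (4 * K' + 2) := by omega
      exact Nat.lt_of_mul_lt_mul_left h1
    have h43 : 4 * ((j0 - 3) / 4) + 3 = j0 := by omega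
    constructor
    · rw [h43]; exact hj0
    · omega
  refine Finset.prod_nbij' (fun k => ((4 * k + 5) / p - 3) / 4)
    (fun l => (p * (4 * l + 3) - 5) / 4) ?_ ?_ ?_ ?_ ?_
  · intro k hk
    beta_reduce
    rw [Finset.mem_range]
    exact (hkey k hk).2
  · intro l hl
    beta_reduce
    rw [Finset.mem_range] at hl
    rw [Finset.mem_filter, Finset.mem_range]
    set A := p * (4 * l + 3) with hA
    have hAmod : A % 4 = 1 := by
      have h2 : A % 4 = (p % 4) * ((4 * l + 3) % 4) % 4 := Nat.mul_mod _ _ _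
      rw [h4] at h2
      omega
    have hA5 : 5 ≤ A := by
      have h3p : 3 ≤ p := by omega
      calc 5 ≤ 3 * 3 := by norm_num
      _ ≤ p * (4 * l + 3) := Nat.mul_le_mul h3p (by omega)
    have hAlt : A < 4 * K + 2 := by
      have h1 : A < p * (4 * K' + 2) := mul_lt_mul_of_pos_left (by omega) hppos
      omega
    refine ⟨by omega, ?_⟩
    have hstep : 4 * ((A - 5) / 4) + 5 = A := by omega
    rw [hstep]
    exact Dvd.intro _ rfl
  · intro k hk
    beta_reduce
    obtain ⟨h1, _⟩ := hkey k hk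
    omega
  · intro l hl
    beta_reduce
    rw [Finset.mem_range] at hl
    set A := p * (4 * l + 3) with hA
    have hAmod : A % 4 = 1 := by
      have h2 : A % 4 = (p % 4) * ((4 * l + 3) % 4) % 4 := Nat.mul_mod _ _ _
      rw [h4] at h2
      omega
    have hA5 : 5 ≤ A := by
      have h3p : 3 ≤ p := by omega
      calc 5 ≤ 3 * 3 := by norm_num
      _ ≤ p * (4 * l + 3) := Nat.mul_le_mul h3p (by omega)
    have hstep : 4 * ((A - 5) / 4) + 5 = A := by omega
    show ((4 * ((A - 5) / 4) + 5) / p - 3) / 4 = l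
    rw [hstep, hA, Nat.mul_div_cancel_left _ hppos]
    omega
  · intro k hk
    beta_reduce
    obtain ⟨h1, _⟩ := hkey k hk
    rw [h1]

end

section

lemma prod_Icc_one_eq_range {M : Type*} [CommMonoid M] (K : ℕ) (f : ℕ → M) :
    ∏ k ∈ Finset.Icc 1 K, f k = ∏ l ∈ Finset.range K, f (l + 1) := by
  refine Finset.prod_nbij' (fun k => k - 1) (fun l => l + 1) ?_ ?_ ?_ ?_ ?_
  · intro a ha
    beta_reduce
    rw [Finset.mem_Icc] at ha
    rw [Finset.mem_range]
    omega
  · intro a ha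
    beta_reduce
    rw [Finset.mem_range] at ha
    rw [Finset.mem_Icc]
    omega
  · intro a ha
    beta_reduce
    rw [Finset.mem_Icc] at ha
    omega
  · intro a ha
    beta_reduce
    omega
  · intro a ha
    beta_reduce
    rw [Finset.mem_Icc] at ha
    congr 1
    omega

lemma prod_const_mul_range {M : Type*} [CommMonoid M] (K : ℕ) (c : M) (f : ℕ → M) :
    ∏ k ∈ Finset.range K, (c * f k) = c ^ K * ∏ k ∈ Finset.range K, f k := by
  rw [Finset.prod_mul_distrib, Finset.prod_const, Finset.card_range]

variable (p : ℕ) [Fact p.Prime]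

lemma norm_natCast_lt_one_iff (n : ℕ) : ‖(n : ℤ_[p])‖ < 1 ↔ p ∣ n := by
  have hcast : ((n : ℤ) : ℤ_[p]) = ((n : ℕ) : ℤ_[p]) := by push_cast; rfl
  rw [← hcast, PadicInt.norm_int_lt_one_iff_dvd, Int.natCast_dvd_natCast]

lemma main_step (h4 : p % 4 = 3) (m : ℕ) (hm : 1 ≤ m)
    (q half : ℤ_[p]) (hq : 4 * q = 1) (hhalf : 2 * half = 1) :
    (∏ k ∈ Finset.Icc 1 ((p ^ m - 1) / 2), ((4 * (k : ℚ_[p]) - 1) / (4 * (k : ℚ_[p]) + 1)))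
      * (∏ k ∈ Finset.Icc 1 ((p ^ (m - 1) - 1) / 2),
          ((4 * (k : ℚ_[p]) - 1) / (4 * (k : ℚ_[p]) + 1)))
      * ((pGamma p (3 * q) : ℚ_[p]) * (pGamma p (3 * q + (p : ℤ_[p]) ^ m * half) : ℚ_[p]))
      = (p : ℚ_[p]) * (q : ℚ_[p]) *
        ((pGamma p (q + (p : ℤ_[p]) ^ m * half) : ℚ_[p]) * (pGamma p (1 + q) : ℚ_[p])) := by
  have hp : p.Prime := Fact.out
  have hodd : p ≠ 2 := by omega
  have hppos : 0 < p := hp.pos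
  have hpmodd : p ^ m % 2 = 1 := Nat.odd_iff.mp ((Nat.odd_iff.mpr (by omega : p % 2 = 1)).pow)
  have hpm1odd : p ^ (m - 1) % 2 = 1 :=
    Nat.odd_iff.mp ((Nat.odd_iff.mpr (by omega : p % 2 = 1)).pow)
  have hpm_pos : 0 < p ^ m := pow_pos hppos m
  have hpm1_pos : 0 < p ^ (m - 1) := pow_pos hppos _
  set K := (p ^ m - 1) / 2 with hKdef
  set K' := (p ^ (m - 1) - 1) / 2 with hK'def
  have hK : 2 * K + 1 = p ^ m := by omega
  have hK' : 2 * K' + 1 = p ^ (m - 1) := by omega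
  -- basic cast facts in ℤ_[p]
  have h4ne : (4 : ℤ_[p]) ≠ 0 := by
    intro h
    rw [h, zero_mul] at hq
    exact zero_ne_one hq
  have hKcast : 2 * (K : ℤ_[p]) + 1 = (p : ℤ_[p]) ^ m := by
    have := congrArg (Nat.cast : ℕ → ℤ_[p]) hK
    push_cast at this
    exact this
  -- the two argument identities
  have hb : 3 * q + (K : ℤ_[p]) = q + (p : ℤ_[p]) ^ m * half := by
    apply mul_left_cancel₀ h4ne
    linear_combination 2 * hq + 2 * hKcast - 2 * ((p : ℤ_[p]) ^ m) * hhalf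
  have ha : 1 + q + (K : ℤ_[p]) = 3 * q + (p : ℤ_[p]) ^ m * half := by
    apply mul_left_cancel₀ h4ne
    linear_combination (-2) * hq + 2 * hKcast - 2 * ((p : ℤ_[p]) ^ m) * hhalf
  have h4n : ‖(4 : ℤ_[p])‖ = 1 := by
    have hnd4 : ¬ p ∣ 4 := by
      intro hd
      have := Nat.le_of_dvd (by norm_num) hd
      have := hp.two_le
      interval_cases p <;> omega
    have := norm_natCast_eq_one p hnd4
    have hcast : ((4 : ℕ) : ℤ_[p]) = (4 : ℤ_[p]) := by norm_num
    rwa [hcast] at this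
  -- norm condition translations
  have hnorm3 : ∀ k : ℕ, (‖3 * q + (k : ℤ_[p])‖ < 1) ↔ p ∣ 4 * k + 3 := by
    intro k
    have h4e : (4 : ℤ_[p]) * (3 * q + (k : ℤ_[p])) = ((4 * k + 3 : ℕ) : ℤ_[p]) := by
      push_cast
      linear_combination 3 * hq
    have hn : ‖3 * q + (k : ℤ_[p])‖ = ‖((4 * k + 3 : ℕ) : ℤ_[p])‖ := by
      rw [← h4e, norm_mul, h4n, one_mul]
    rw [hn, norm_natCast_lt_one_iff]
  have hnorm5 : ∀ k : ℕ, (‖1 + q + (k : ℤ_[p])‖ < 1) ↔ p ∣ 4 * k + 5 := by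
    intro k
    have h4e : (4 : ℤ_[p]) * (1 + q + (k : ℤ_[p])) = ((4 * k + 5 : ℕ) : ℤ_[p]) := by
      push_cast
      linear_combination hq
    have hn : ‖1 + q + (k : ℤ_[p])‖ = ‖((4 * k + 5 : ℕ) : ℤ_[p])‖ := by
      rw [← h4e, norm_mul, h4n, one_mul]
    rw [hn, norm_natCast_lt_one_iff]
  -- telescoping in ℤ_[p]
  have hT3 : pGamma p (q + (p : ℤ_[p]) ^ m * half) = pGamma p (3 * q) *
      ∏ k ∈ Finset.range K,
        (if p ∣ 4 * k + 3 then (-1 : ℤ_[p]) else -(((4 * k + 3 : ℕ) : ℤ_[p]) * q)) := by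
    rw [← hb, pGamma_add_nat p hodd (3 * q) K]
    congr 1
    refine Finset.prod_congr rfl fun k _ => ?_
    by_cases hd : p ∣ 4 * k + 3
    · rw [if_pos ((hnorm3 k).mpr hd), if_pos hd]
    · rw [if_neg (fun hc => hd ((hnorm3 k).mp hc)), if_neg hd]
      have : 3 * q + (k : ℤ_[p]) = ((4 * k + 3 : ℕ) : ℤ_[p]) * q := by
        apply mul_left_cancel₀ h4ne
        push_cast
        linear_combination (-4 * (k : ℤ_[p])) * hq
      rw [this]
  have hT5 : pGamma p (3 * q + (p : ℤ_[p]) ^ m * half) = pGamma p (1 + q) *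
      ∏ k ∈ Finset.range K,
        (if p ∣ 4 * k + 5 then (-1 : ℤ_[p]) else -(((4 * k + 5 : ℕ) : ℤ_[p]) * q)) := by
    rw [← ha, pGamma_add_nat p hodd (1 + q) K]
    congr 1
    refine Finset.prod_congr rfl fun k _ => ?_
    by_cases hd : p ∣ 4 * k + 5
    · rw [if_pos ((hnorm5 k).mpr hd), if_pos hd]
    · rw [if_neg (fun hc => hd ((hnorm5 k).mp hc)), if_neg hd]
      have : 1 + q + (k : ℤ_[p]) = ((4 * k + 5 : ℕ) : ℤ_[p]) * q := by
        apply mul_left_cancel₀ h4ne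
        push_cast
        linear_combination (-4 * (k : ℤ_[p]) - 4) * hq
      rw [this]
  -- coerce to ℚ_[p]
  set qQ : ℚ_[p] := (q : ℚ_[p]) with hqQdef
  have hqQ : 4 * qQ = 1 := by
    have := congrArg (fun z : ℤ_[p] => (z : ℚ_[p])) hq
    push_cast at this
    exact this
  set A : ℚ_[p] := ∏ k ∈ Finset.range K,
      (if p ∣ 4 * k + 3 then (-1 : ℚ_[p]) else -(((4 * k + 3 : ℕ) : ℚ_[p]) * qQ)) with hAdef
  set B : ℚ_[p] := ∏ k ∈ Finset.range K,
      (if p ∣ 4 * k + 5 then (-1 : ℚ_[p]) else -(((4 * k + 5 : ℕ) : ℚ_[p]) * qQ)) with hBdef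
  have hQ3 : (pGamma p (q + (p : ℤ_[p]) ^ m * half) : ℚ_[p]) =
      (pGamma p (3 * q) : ℚ_[p]) * A := by
    rw [hT3, PadicInt.coe_mul]
    congr 1
    rw [show ((∏ k ∈ Finset.range K,
          (if p ∣ 4 * k + 3 then (-1 : ℤ_[p]) else -(((4 * k + 3 : ℕ) : ℤ_[p]) * q)) : ℤ_[p]) : ℚ_[p])
          = ∏ k ∈ Finset.range K, ((if p ∣ 4 * k + 3 then (-1 : ℤ_[p])
              else -(((4 * k + 3 : ℕ) : ℤ_[p]) * q) : ℤ_[p]) : ℚ_[p])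
        from map_prod PadicInt.Coe.ringHom _ _]
    rw [hAdef]
    refine Finset.prod_congr rfl fun k _ => ?_
    by_cases hd : p ∣ 4 * k + 3
    · rw [if_pos hd, if_pos hd]; push_cast; ring
    · rw [if_neg hd, if_neg hd, hqQdef]
      simp only [PadicInt.coe_neg, PadicInt.coe_mul, PadicInt.coe_natCast]
  have hQ5 : (pGamma p (3 * q + (p : ℤ_[p]) ^ m * half) : ℚ_[p]) =
      (pGamma p (1 + q) : ℚ_[p]) * B := by
    rw [hT5, PadicInt.coe_mul]
    congr 1
    rw [show ((∏ k ∈ Finset.range K,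
          (if p ∣ 4 * k + 5 then (-1 : ℤ_[p]) else -(((4 * k + 5 : ℕ) : ℤ_[p]) * q)) : ℤ_[p]) : ℚ_[p])
          = ∏ k ∈ Finset.range K, ((if p ∣ 4 * k + 5 then (-1 : ℤ_[p])
              else -(((4 * k + 5 : ℕ) : ℤ_[p]) * q) : ℤ_[p]) : ℚ_[p])
        from map_prod PadicInt.Coe.ringHom _ _]
    rw [hBdef]
    refine Finset.prod_congr rfl fun k _ => ?_
    by_cases hd : p ∣ 4 * k + 5
    · rw [if_pos hd, if_pos hd]; push_cast; ring
    · rw [if_neg hd, if_neg hd, hqQdef]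
      simp only [PadicInt.coe_neg, PadicInt.coe_mul, PadicInt.coe_natCast]
  -- products of numerators/denominators
  set Pf : ℚ_[p] := ∏ k ∈ Finset.range K, ((4 * k + 3 : ℕ) : ℚ_[p]) with hPfdef
  set Pg : ℚ_[p] := ∏ k ∈ Finset.range K, ((4 * k + 5 : ℕ) : ℚ_[p]) with hPgdef
  set Q1 : ℚ_[p] := ∏ l ∈ Finset.range (K' + 1), ((4 * l + 1 : ℕ) : ℚ_[p]) with hQ1def
  set Q3 : ℚ_[p] := ∏ l ∈ Finset.range K', ((4 * l + 3 : ℕ) : ℚ_[p]) with hQ3def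
  set Q5 : ℚ_[p] := ∏ l ∈ Finset.range K', ((4 * l + 5 : ℕ) : ℚ_[p]) with hQ5def
  -- C3 : (-qQ)^K * Pf = A * ((pQ*qQ)^(K'+1) * Q1)
  have hC3 : (-qQ) ^ K * Pf = A * (((p : ℚ_[p]) * qQ) ^ (K' + 1) * Q1) := by
    have e1 : ∏ k ∈ Finset.range K, (-(((4 * k + 3 : ℕ) : ℚ_[p]) * qQ))
        = (-qQ) ^ K * Pf := by
      rw [hPfdef, ← prod_const_mul_range]
      exact Finset.prod_congr rfl fun k _ => by ring
    have e2 : ∏ k ∈ Finset.range K, (-(((4 * k + 3 : ℕ) : ℚ_[p]) * qQ))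
        = A * ∏ k ∈ (Finset.range K).filter (fun k => p ∣ 4 * k + 3),
            (((4 * k + 3 : ℕ) : ℚ_[p]) * qQ) := by
      rw [hAdef, Finset.prod_filter, ← Finset.prod_mul_distrib]
      refine Finset.prod_congr rfl fun k _ => ?_
      by_cases hd : p ∣ 4 * k + 3
      · rw [if_pos hd, if_pos hd]; ring
      · rw [if_neg hd, if_neg hd]; ring
    have e3 : ∏ k ∈ (Finset.range K).filter (fun k => p ∣ 4 * k + 3),
          (((4 * k + 3 : ℕ) : ℚ_[p]) * qQ)
        = ∏ l ∈ Finset.range (K' + 1), (((p * (4 * l + 1) : ℕ) : ℚ_[p]) * qQ) :=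
      filter_bij3 p m K K' hp h4 hm hK hK' (fun n => ((n : ℚ_[p]) * qQ))
    have e4 : ∏ l ∈ Finset.range (K' + 1), (((p * (4 * l + 1) : ℕ) : ℚ_[p]) * qQ)
        = ((p : ℚ_[p]) * qQ) ^ (K' + 1) * Q1 := by
      rw [hQ1def, ← prod_const_mul_range]
      refine Finset.prod_congr rfl fun l _ => by push_cast; ring
    rw [← e1, e2, e3, e4]
  have hC5 : (-qQ) ^ K * Pg = B * (((p : ℚ_[p]) * qQ) ^ K' * Q3) := by
    have e1 : ∏ k ∈ Finset.range K, (-(((4 * k + 5 : ℕ) : ℚ_[p]) * qQ))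
        = (-qQ) ^ K * Pg := by
      rw [hPgdef, ← prod_const_mul_range]
      exact Finset.prod_congr rfl fun k _ => by ring
    have e2 : ∏ k ∈ Finset.range K, (-(((4 * k + 5 : ℕ) : ℚ_[p]) * qQ))
        = B * ∏ k ∈ (Finset.range K).filter (fun k => p ∣ 4 * k + 5),
            (((4 * k + 5 : ℕ) : ℚ_[p]) * qQ) := by
      rw [hBdef, Finset.prod_filter, ← Finset.prod_mul_distrib]
      refine Finset.prod_congr rfl fun k _ => ?_
      by_cases hd : p ∣ 4 * k + 5
      · rw [if_pos hd, if_pos hd]; ring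
      · rw [if_neg hd, if_neg hd]; ring
    have e3 : ∏ k ∈ (Finset.range K).filter (fun k => p ∣ 4 * k + 5),
          (((4 * k + 5 : ℕ) : ℚ_[p]) * qQ)
        = ∏ l ∈ Finset.range K', (((p * (4 * l + 3) : ℕ) : ℚ_[p]) * qQ) :=
      filter_bij5 p m K K' hp h4 hm hK hK' (fun n => ((n : ℚ_[p]) * qQ))
    have e4 : ∏ l ∈ Finset.range K', (((p * (4 * l + 3) : ℕ) : ℚ_[p]) * qQ)
        = ((p : ℚ_[p]) * qQ) ^ K' * Q3 := by
      rw [hQ3def, ← prod_const_mul_range]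
      refine Finset.prod_congr rfl fun l _ => by push_cast; ring
    rw [← e1, e2, e3, e4]
  -- Q1 = Q5
  have hQ15 : Q1 = Q5 := by
    rw [hQ1def, hQ5def, Finset.prod_range_succ']
    have : ∀ l, ((4 * (l + 1) + 1 : ℕ) : ℚ_[p]) = ((4 * l + 5 : ℕ) : ℚ_[p]) := by
      intro l; push_cast; ring
    rw [Finset.prod_congr rfl (fun l _ => this l)]
    norm_num
  -- rewrite the two Icc-products
  have hS1 : (∏ k ∈ Finset.Icc 1 K, ((4 * (k : ℚ_[p]) - 1) / (4 * (k : ℚ_[p]) + 1)))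
      = Pf / Pg := by
    rw [prod_Icc_one_eq_range, hPfdef, hPgdef, ← Finset.prod_div_distrib]
    refine Finset.prod_congr rfl fun l _ => ?_
    have e1 : 4 * ((l + 1 : ℕ) : ℚ_[p]) - 1 = ((4 * l + 3 : ℕ) : ℚ_[p]) := by push_cast; ring
    have e2 : 4 * ((l + 1 : ℕ) : ℚ_[p]) + 1 = ((4 * l + 5 : ℕ) : ℚ_[p]) := by push_cast; ring
    rw [e1, e2]
  have hS2 : (∏ k ∈ Finset.Icc 1 K', ((4 * (k : ℚ_[p]) - 1) / (4 * (k : ℚ_[p]) + 1)))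
      = Q3 / Q5 := by
    rw [prod_Icc_one_eq_range, hQ3def, hQ5def, ← Finset.prod_div_distrib]
    refine Finset.prod_congr rfl fun l _ => ?_
    have e1 : 4 * ((l + 1 : ℕ) : ℚ_[p]) - 1 = ((4 * l + 3 : ℕ) : ℚ_[p]) := by push_cast; ring
    have e2 : 4 * ((l + 1 : ℕ) : ℚ_[p]) + 1 = ((4 * l + 5 : ℕ) : ℚ_[p]) := by push_cast; ring
    rw [e1, e2]
  -- nonvanishing
  have hqQne : qQ ≠ 0 := by
    intro h; rw [h, mul_zero] at hqQ; exact zero_ne_one hqQ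
  have hcastne : ∀ n : ℕ, 0 < n → ((n : ℚ_[p])) ≠ 0 := by
    intro n hn
    exact_mod_cast Nat.cast_ne_zero.mpr (by omega)
  have hPgne : Pg ≠ 0 := by
    rw [hPgdef]
    rw [Finset.prod_ne_zero_iff]
    intro k _; exact hcastne _ (by omega)
  have hQ5ne : Q5 ≠ 0 := by
    rw [hQ5def, Finset.prod_ne_zero_iff]
    intro k _; exact hcastne _ (by omega)
  have hQ3ne : Q3 ≠ 0 := by
    rw [hQ3def, Finset.prod_ne_zero_iff]
    intro k _; exact hcastne _ (by omega)
  have hXne : (-qQ) ^ K ≠ 0 := pow_ne_zero _ (neg_ne_zero.mpr hqQne)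
  -- key cancellation
  have hkey : (-qQ) ^ K * (Pf * Q3 * B) = (-qQ) ^ K * (((p : ℚ_[p]) * qQ) * A * (Pg * Q5)) := by
    linear_combination (B * Q3) * hC3 - ((p : ℚ_[p]) * qQ * A * Q5) * hC5
      + (A * B * Q3 * ((p : ℚ_[p]) * qQ) ^ (K' + 1)) * hQ15
  have hkey2 : Pf * Q3 * B = ((p : ℚ_[p]) * qQ) * A * (Pg * Q5) :=
    mul_left_cancel₀ hXne hkey
  -- final assembly
  rw [hS1, hS2, hQ3, hQ5]
  field_simp
  linear_combination ((pGamma p (3 * q) : ℚ_[p]) * (pGamma p (1 + q) : ℚ_[p])) * hkey2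

end

theorem induction_step (p n : ℕ) [Fact p.Prime] (h4 : p % 4 = 3) (hn : 2 ≤ n)
    (q half : ℤ_[p]) (hq : 4 * q = 1) (hhalf : 2 * half = 1) :
    (∏ k ∈ Finset.Icc 1 ((p ^ (2 * n) - 1) / 2),
        ((4 * (k : ℚ_[p]) - 1) / (4 * (k : ℚ_[p]) + 1)))
      = (∏ k ∈ Finset.Icc 1 ((p ^ (2 * n - 2) - 1) / 2),
          ((4 * (k : ℚ_[p]) - 1) / (4 * (k : ℚ_[p]) + 1)))
        * ((pGamma p (3 * q + (p : ℤ_[p]) ^ (2 * n - 1) * half) : ℚ_[p])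
            / (pGamma p (q + (p : ℤ_[p]) ^ (2 * n - 1) * half) : ℚ_[p]))
        * ((pGamma p (q + (p : ℤ_[p]) ^ (2 * n) * half) : ℚ_[p])
            / (pGamma p (3 * q + (p : ℤ_[p]) ^ (2 * n) * half) : ℚ_[p])) := by
  have hp : p.Prime := Fact.out
  have hodd : p ≠ 2 := by
    have := hp.two_le
    omega
  have hΓne : ∀ x : ℤ_[p], (pGamma p x : ℚ_[p]) ≠ 0 := by
    intro x hx
    exact pGamma_ne_zero p hodd x (PadicInt.coe_eq_zero.mp hx)
  have h1 := main_step p h4 (2 * n) (by omega) q half hq hhalf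
  have h2 := main_step p h4 (2 * n - 1) (by omega) q half hq hhalf
  rw [show 2 * n - 1 - 1 = 2 * n - 2 from by omega] at h2
  rw [show 2 * n - 1 = 2 * n - 1 from rfl] at h1
  set S1 := (∏ k ∈ Finset.Icc 1 ((p ^ (2 * n) - 1) / 2),
      ((4 * (k : ℚ_[p]) - 1) / (4 * (k : ℚ_[p]) + 1))) with hS1def
  set S2 := (∏ k ∈ Finset.Icc 1 ((p ^ (2 * n - 1) - 1) / 2),
      ((4 * (k : ℚ_[p]) - 1) / (4 * (k : ℚ_[p]) + 1))) with hS2def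
  set S3 := (∏ k ∈ Finset.Icc 1 ((p ^ (2 * n - 2) - 1) / 2),
      ((4 * (k : ℚ_[p]) - 1) / (4 * (k : ℚ_[p]) + 1))) with hS3def
  have hS2ne : S2 ≠ 0 := by
    rw [hS2def, Finset.prod_ne_zero_iff]
    intro k hk
    rw [Finset.mem_Icc] at hk
    apply div_ne_zero
    · have he : 4 * (k : ℚ_[p]) - 1 = ((4 * k - 1 : ℕ) : ℚ_[p]) := by
        have h1k : (1 : ℕ) ≤ 4 * k := by omega
        push_cast [h1k]
        ring
      rw [he]
      exact Nat.cast_ne_zero.mpr (by omega)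
    · have he : 4 * (k : ℚ_[p]) + 1 = ((4 * k + 1 : ℕ) : ℚ_[p]) := by push_cast; ring
      rw [he]
      exact Nat.cast_ne_zero.mpr (by omega)
  have hfacne : S2 * (pGamma p (3 * q) : ℚ_[p]) ≠ 0 :=
    mul_ne_zero hS2ne (hΓne _)
  have hkey : (S2 * (pGamma p (3 * q) : ℚ_[p])) *
      (S1 * ((pGamma p (q + (p : ℤ_[p]) ^ (2 * n - 1) * half) : ℚ_[p])
        * (pGamma p (3 * q + (p : ℤ_[p]) ^ (2 * n) * half) : ℚ_[p])))
      = (S2 * (pGamma p (3 * q) : ℚ_[p])) *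
      (S3 * (pGamma p (3 * q + (p : ℤ_[p]) ^ (2 * n - 1) * half) : ℚ_[p])
        * (pGamma p (q + (p : ℤ_[p]) ^ (2 * n) * half) : ℚ_[p])) := by
    linear_combination (pGamma p (q + (p : ℤ_[p]) ^ (2 * n - 1) * half) : ℚ_[p]) * h1
      - (pGamma p (q + (p : ℤ_[p]) ^ (2 * n) * half) : ℚ_[p]) * h2
  have hT := mul_left_cancel₀ hfacne hkey
  have hb' := hΓne (q + (p : ℤ_[p]) ^ (2 * n - 1) * half)
  have ha' := hΓne (3 * q + (p : ℤ_[p]) ^ (2 * n) * half)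
  field_simp [hb', ha']
  linear_combination hT
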